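/- Let n ≥ 1 and let J² : Λ²(gl(n,ℝ)) → (ℝⁿ → Λ²(ℝⁿ)) be the linear map determined by J²(A ∧ B)(x) = (Aᵀx) ∧ (Bᵀx). Then J² is surjective onto the space of quadratic bivector fields: for every family (Q_{jl})_{1 ≤ j < l ≤ n} of homogeneous quadratic polynomial functions Q_{jl} : ℝⁿ → ℝ there exists r ∈ Λ²(gl(n,ℝ)) such that J²(r)(x) = Σ_{j<l} Q_{jl}(x) (e_j ∧ e_l) for all x ∈ ℝⁿ. -/

import Mathlib

open scoped Matrix

/-- The map `J² : Λ²(gl(n,ℝ)) → (ℝⁿ → Λ²(ℝⁿ))` determined by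
`J²(A ∧ B)(x) = (Aᵀx) ∧ (Bᵀx)` is surjective onto the space of quadratic
bivector fields: for every family `(Q_{jl})_{j<l}` of homogeneous quadratic
polynomial functions on `ℝⁿ` there is `r ∈ Λ²(gl(n,ℝ))` with
`J²(r)(x) = Σ_{j<l} Q_{jl}(x) (e_j ∧ e_l)` for all `x`. -/
theorem stmt_8 (n : ℕ) (hn : 1 ≤ n)
    (J2 : ⋀[ℝ]^2 (Matrix (Fin n) (Fin n) ℝ) →ₗ[ℝ]
          ((Fin n → ℝ) → ExteriorAlgebra ℝ (Fin n → ℝ)))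
    (hJ2 : ∀ (A B : Matrix (Fin n) (Fin n) ℝ) (x : Fin n → ℝ),
      J2 ⟨ExteriorAlgebra.ιMulti ℝ 2 ![A, B],
          ExteriorAlgebra.ιMulti_range ℝ 2 (Set.mem_range_self _)⟩ x
        = ExteriorAlgebra.ιMulti ℝ 2 ![Aᵀ *ᵥ x, Bᵀ *ᵥ x])
    (Q : Fin n → Fin n → (Fin n → ℝ) → ℝ)
    (hQ : ∀ j l : Fin n, ∃ c : Fin n → Fin n → ℝ,
      ∀ x : Fin n → ℝ, Q j l x = ∑ i : Fin n, ∑ k : Fin n, c i k * x i * x k) :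
    ∃ r : ⋀[ℝ]^2 (Matrix (Fin n) (Fin n) ℝ),
      ∀ x : Fin n → ℝ,
        J2 r x = ∑ j : Fin n, ∑ l : Fin n,
          (if j < l then Q j l x else 0) •
            ExteriorAlgebra.ιMulti ℝ 2
              ![(Pi.single j (1:ℝ) : Fin n → ℝ), (Pi.single l (1:ℝ) : Fin n → ℝ)] := by
  choose c hc using hQ
  set E : Fin n → Fin n → Matrix (Fin n) (Fin n) ℝ :=
    fun i j => Matrix.single i j 1 with hE
  set w : Fin n → Fin n → Fin n → Fin n → ⋀[ℝ]^2 (Matrix (Fin n) (Fin n) ℝ) :=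
    fun j l i k => ⟨ExteriorAlgebra.ιMulti ℝ 2 ![E i j, E k l],
      ExteriorAlgebra.ιMulti_range ℝ 2 (Set.mem_range_self _)⟩ with hw
  refine ⟨∑ j, ∑ l, ∑ i, ∑ k, (if j < l then c j l i k else 0) • w j l i k, fun x => ?_⟩
  have hEx : ∀ i j : Fin n, (E i j)ᵀ *ᵥ x = x i • (Pi.single j (1:ℝ) : Fin n → ℝ) := by
    intro i j
    have ht : (E i j)ᵀ = Matrix.single j i 1 := by
      rw [hE]; ext a b; simp [Matrix.single, Matrix.transpose_apply, and_comm]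
    rw [ht, Matrix.single_mulVec]
    funext m
    by_cases hm : m = j <;> simp [hm, Function.update_apply, Pi.single_apply]
  have key : ∀ j l i k, J2 (w j l i k) x
      = (x i * x k) • ExteriorAlgebra.ιMulti ℝ 2
          ![(Pi.single j (1:ℝ) : Fin n → ℝ), (Pi.single l (1:ℝ) : Fin n → ℝ)] := by
    intro j l i k
    rw [hw]
    simp only
    rw [hJ2, hEx, hEx]
    have := (ExteriorAlgebra.ιMulti ℝ (M := Fin n → ℝ) 2).toMultilinearMap.map_smul_univ
      ![x i, x k] ![(Pi.single j (1:ℝ) : Fin n → ℝ), (Pi.single l (1:ℝ) : Fin n → ℝ)]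
    have harg : (fun t => (![x i, x k] t) • (![(Pi.single j (1:ℝ) : Fin n → ℝ),
        (Pi.single l (1:ℝ) : Fin n → ℝ)] t))
        = ![x i • (Pi.single j (1:ℝ) : Fin n → ℝ), x k • (Pi.single l (1:ℝ) : Fin n → ℝ)] := by
      funext t; fin_cases t <;> simp
    rw [harg] at this
    simpa [Fin.prod_univ_two] using this
  simp only [map_sum, map_smul, Finset.sum_apply, Pi.smul_apply, key, hc]
  refine Finset.sum_congr rfl fun j _ => Finset.sum_congr rfl fun l _ => ?_
  by_cases h : j < l
  · simp only [h, if_true, Finset.sum_smul]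
    refine Finset.sum_congr rfl fun i _ => Finset.sum_congr rfl fun k _ => ?_
    rw [smul_smul, mul_assoc]
  · simp [h]
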